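/- Let q be a real number with 0 < q < 1, let d be an odd positive integer, let χ be a Dirichlet character modulo d, and let n be a nonnegative integer. Then the Abel-regularized generalized q-Euler number attached to χ is given by lim_{r→1⁻} 2·∑_{m=0}^∞ χ(m)·(−1)^m · r^m · [m]_q^n = [d]_q^n · ∑_{a=0}^{d−1} χ(a)·(−1)^a · E_{n,q^d}(a/d), where the limit is taken in the complex numbers and E_{n,q^d}(a/d) is the q^d-Euler polynomial evaluated at a/d. -/

import Mathlib

open Filter Finset Topology

/-- The `q`-Euler polynomial `E_{n,q}(x) = 2·(1/(1−q))^n · ∑_{j=0}^n C(n,j)·(−1)^j·q^{xj}/(1+q^j)`,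
where `q^{xj}` is a real power (`rpow`). -/
noncomputable def qEulerPoly (q : ℝ) (n : ℕ) (x : ℝ) : ℝ :=
  2 * (1/(1-q))^n *
    ∑ j ∈ Finset.range (n+1), (n.choose j : ℝ) * (-1)^j * q ^ (x * (j:ℝ)) / (1 + q^j)

set_option maxHeartbeats 1000000

lemma summable_char_pow {d : ℕ} (χ : DirichletCharacter ℂ d) {x : ℂ} (hx : ‖x‖ < 1) :
    Summable (fun m : ℕ => χ (m : ZMod d) * (-1:ℂ)^m * x^m) := by
  apply Summable.of_norm
  refine Summable.of_nonneg_of_le (fun m => norm_nonneg _) (fun m => ?_)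
    (summable_geometric_of_lt_one (norm_nonneg x) hx)
  rw [norm_mul, norm_mul, norm_pow, norm_pow, norm_neg, norm_one, one_pow, mul_one]
  exact mul_le_of_le_one_left (by positivity) (χ.norm_le_one _)

lemma tsum_char_geom {d : ℕ} [NeZero d] (hd : Odd d) (χ : DirichletCharacter ℂ d)
    {x : ℂ} (hx : ‖x‖ < 1) :
    ∑' m : ℕ, χ (m : ZMod d) * (-1:ℂ)^m * x^m
      = (∑ a ∈ Finset.range d, χ (a : ZMod d) * (-1:ℂ)^a * x^a) / (1 + x^d) := by
  have hxd : ‖-x^d‖ < 1 := by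
    rw [norm_neg, norm_pow]
    exact pow_lt_one₀ (norm_nonneg x) hx (NeZero.ne d)
  have hf : Summable (fun m : ℕ => χ (m : ZMod d) * (-1:ℂ)^m * x^m) := summable_char_pow χ hx
  have key : ∀ (k : ℕ) (a : Fin d),
      χ ((k * d + (a:ℕ) : ℕ) : ZMod d) * (-1:ℂ)^(k * d + (a:ℕ)) * x^(k * d + (a:ℕ))
        = (χ ((a:ℕ) : ZMod d) * (-1:ℂ)^(a:ℕ) * x^(a:ℕ)) * (-x^d)^k := by
    intro k a
    have h1 : ((k * d + (a:ℕ) : ℕ) : ZMod d) = ((a:ℕ) : ZMod d) := by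
      push_cast
      simp [ZMod.natCast_self]
    have h2 : ((-1:ℂ))^(k * d + (a:ℕ)) = (-1:ℂ)^(a:ℕ) * (-1:ℂ)^k := by
      rw [pow_add, pow_mul', hd.neg_one_pow, mul_comm]
    have h3 : x^(k * d + (a:ℕ)) = x^(a:ℕ) * (x^d)^k := by
      rw [pow_add, pow_mul', mul_comm]
    rw [h1, h2, h3, neg_pow]
    ring
  have hg : Summable (fun p : ℕ × Fin d =>
      χ (((Nat.divModEquiv d).symm p : ℕ) : ZMod d) * (-1:ℂ)^((Nat.divModEquiv d).symm p : ℕ)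
        * x^((Nat.divModEquiv d).symm p : ℕ)) := (Equiv.summable_iff _).2 hf
  have e1 : ∑' m : ℕ, χ (m : ZMod d) * (-1:ℂ)^m * x^m
      = ∑' p : ℕ × Fin d,
          χ (((Nat.divModEquiv d).symm p : ℕ) : ZMod d) * (-1:ℂ)^((Nat.divModEquiv d).symm p : ℕ)
            * x^((Nat.divModEquiv d).symm p : ℕ) :=
    ((Nat.divModEquiv d).symm.tsum_eq _).symm
  rw [e1, Summable.tsum_prod hg]
  have e2 : ∀ k : ℕ, (∑' a : Fin d,
        χ (((Nat.divModEquiv d).symm (k, a) : ℕ) : ZMod d)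
          * (-1:ℂ)^((Nat.divModEquiv d).symm (k, a) : ℕ) * x^((Nat.divModEquiv d).symm (k, a) : ℕ))
      = (∑ a ∈ Finset.range d, χ (a : ZMod d) * (-1:ℂ)^a * x^a) * (-x^d)^k := by
    intro k
    rw [tsum_fintype]
    have : ∀ a : Fin d, χ (((Nat.divModEquiv d).symm (k, a) : ℕ) : ZMod d)
          * (-1:ℂ)^((Nat.divModEquiv d).symm (k, a) : ℕ) * x^((Nat.divModEquiv d).symm (k, a) : ℕ)
        = (χ ((a:ℕ) : ZMod d) * (-1:ℂ)^(a:ℕ) * x^(a:ℕ)) * (-x^d)^k := by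
      intro a
      simpa [Nat.divModEquiv] using key k a
    rw [Finset.sum_congr rfl (fun a _ => this a), ← Finset.sum_mul]
    exact congrArg (· * (-x^d)^k)
      (Fin.sum_univ_eq_sum_range (fun a => χ (a : ZMod d) * (-1:ℂ)^a * x^a) d)
  calc ∑' (k : ℕ), (∑' a : Fin d,
        χ (((Nat.divModEquiv d).symm (k, a) : ℕ) : ZMod d)
          * (-1:ℂ)^((Nat.divModEquiv d).symm (k, a) : ℕ) * x^((Nat.divModEquiv d).symm (k, a) : ℕ))
      = ∑' k : ℕ, (∑ a ∈ Finset.range d, χ (a : ZMod d) * (-1:ℂ)^a * x^a) * (-x^d)^k :=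
        tsum_congr e2
    _ = (∑ a ∈ Finset.range d, χ (a : ZMod d) * (-1:ℂ)^a * x^a) * (1 - (-x^d))⁻¹ := by
        rw [tsum_mul_left, tsum_geometric_of_norm_lt_one hxd]
    _ = (∑ a ∈ Finset.range d, χ (a : ZMod d) * (-1:ℂ)^a * x^a) / (1 + x^d) := by
        rw [sub_neg_eq_add, div_eq_mul_inv]

/-- for odd `d`, a Dirichlet character `χ` mod `d`, and `n : ℕ`, the
Abel-regularized generalized `q`-Euler number attached to `χ` satisfies
`lim_{r→1⁻} 2·∑ χ(m)(−1)^m r^m [m]_q^n = [d]_q^n · ∑_{a=0}^{d−1} χ(a)(−1)^a E_{n,q^d}(a/d)`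
in `ℂ`. -/
theorem generalized_qEuler_number (q : ℝ) (hq0 : 0 < q) (hq1 : q < 1)
    (d : ℕ) (hd : Odd d) (hdpos : 0 < d) (χ : DirichletCharacter ℂ d) (n : ℕ) :
    Tendsto (fun r : ℝ => 2 * ∑' m : ℕ,
        χ (m : ZMod d) * (-1:ℂ)^m * (r:ℂ)^m * ((((1 - q^m)/(1-q))^n : ℝ) : ℂ))
      (nhdsWithin (1:ℝ) (Set.Iio 1))
      (nhds (((((1 - q^d)/(1-q))^n : ℝ) : ℂ) *
        ∑ a ∈ Finset.range d,
          χ (a : ZMod d) * (-1:ℂ)^a * ((qEulerPoly (q^d) n ((a:ℝ)/(d:ℝ)) : ℝ) : ℂ))) := by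
  haveI : NeZero d := ⟨hdpos.ne'⟩
  have hqd1 : q ^ d < 1 := pow_lt_one₀ hq0.le hq1 (NeZero.ne d)
  have hq1' : (1:ℝ) - q ≠ 0 := by linarith
  have hqd1' : (1:ℝ) - q ^ d ≠ 0 := by linarith
  have hq1c : (1:ℂ) - (q:ℂ) ≠ 0 := by exact_mod_cast Complex.ofReal_ne_zero.mpr hq1'
  have hqd1c : (1:ℂ) - (q:ℂ)^d ≠ 0 := by
    have := Complex.ofReal_ne_zero.mpr hqd1'
    push_cast at this
    exact this
  have hdenR : ∀ j : ℕ, (0:ℝ) < 1 + q^(d*j) := fun j => by positivity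
  have hdenC : ∀ j : ℕ, (1:ℂ) + (q:ℂ)^(d*j) ≠ 0 := by
    intro j
    have := Complex.ofReal_ne_zero.mpr (hdenR j).ne'
    push_cast at this
    exact this
  set G : ℝ → ℂ := fun r => 2 * (((1/(1-q))^n : ℝ) : ℂ) *
      ∑ j ∈ Finset.range (n+1), (n.choose j : ℂ) * (-1:ℂ)^j *
        ((∑ a ∈ Finset.range d, χ (a : ZMod d) * (-1:ℂ)^a * ((r:ℂ) * (q:ℂ)^j)^a) /
          (1 + ((r:ℂ) * (q:ℂ)^j)^d)) with hGdef
  have hxj : ∀ (r : ℝ), 0 < r → r < 1 → ∀ j : ℕ, ‖(r:ℂ) * (q:ℂ)^j‖ < 1 := by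
    intro r hr0 hr1 j
    rw [norm_mul, norm_pow, Complex.norm_real, Complex.norm_real,
      Real.norm_of_nonneg hr0.le, Real.norm_of_nonneg hq0.le]
    calc r * q ^ j ≤ r * 1 :=
          mul_le_mul_of_nonneg_left (pow_le_one₀ hq0.le hq1.le) hr0.le
      _ < 1 := by rwa [mul_one]
  -- Step 1: eventual equality with G on (0,1)
  have heq : ∀ r : ℝ, 0 < r → r < 1 →
      2 * ∑' m : ℕ, χ (m : ZMod d) * (-1:ℂ)^m * (r:ℂ)^m * ((((1 - q^m)/(1-q))^n : ℝ) : ℂ)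
        = G r := by
    intro r hr0 hr1
    have hterm : ∀ m : ℕ,
        χ (m : ZMod d) * (-1:ℂ)^m * (r:ℂ)^m * ((((1 - q^m)/(1-q))^n : ℝ) : ℂ)
          = ∑ j ∈ Finset.range (n+1), (((1/(1-q))^n : ℝ) : ℂ) *
              ((n.choose j : ℂ) * (-1:ℂ)^j *
                (χ (m : ZMod d) * (-1:ℂ)^m * ((r:ℂ) * (q:ℂ)^j)^m)) := by
      intro m
      have hbin : ((1:ℂ) - (q:ℂ)^m)^n
          = ∑ j ∈ Finset.range (n+1), (n.choose j : ℂ) * (-1:ℂ)^j * ((q:ℂ)^j)^m := by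
        rw [sub_eq_add_neg, add_comm, add_pow]
        refine Finset.sum_congr rfl fun j hj => ?_
        rw [neg_pow, one_pow, pow_right_comm]
        ring
      push_cast
      rw [div_pow, hbin, Finset.sum_div, Finset.mul_sum]
      refine Finset.sum_congr rfl fun j hj => ?_
      rw [mul_pow]
      field_simp
      have h2 : (1 - (q:ℂ))^n * (1 / (1 - (q:ℂ)))^n = 1 := by
        rw [← mul_pow, mul_one_div_cancel hq1c, one_pow]
      linear_combination (-(χ (m : ZMod d) * (r:ℂ)^m * (n.choose j : ℂ) * ((q:ℂ)^j)^m)) * h2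
    rw [tsum_congr hterm, Summable.tsum_finsetSum (fun j _ =>
      Summable.mul_left _ (Summable.mul_left _ (summable_char_pow χ (hxj r hr0 hr1 j))))]
    have hperj : ∀ j ∈ Finset.range (n+1),
        (∑' m : ℕ, (((1/(1-q))^n : ℝ) : ℂ) * ((n.choose j : ℂ) * (-1:ℂ)^j *
            (χ (m : ZMod d) * (-1:ℂ)^m * ((r:ℂ) * (q:ℂ)^j)^m)))
          = (((1/(1-q))^n : ℝ) : ℂ) * ((n.choose j : ℂ) * (-1:ℂ)^j *
              ((∑ a ∈ Finset.range d, χ (a : ZMod d) * (-1:ℂ)^a * ((r:ℂ) * (q:ℂ)^j)^a) /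
                (1 + ((r:ℂ) * (q:ℂ)^j)^d))) := by
      intro j _
      rw [tsum_mul_left, tsum_mul_left, tsum_char_geom hd χ (hxj r hr0 hr1 j)]
    rw [Finset.sum_congr rfl hperj]
    simp only [hGdef]
    rw [← Finset.mul_sum, ← mul_assoc]
  -- Step 2: G tends to G 1
  have hGtend : Tendsto G (nhdsWithin (1:ℝ) (Set.Iio 1)) (nhds (G 1)) := by
    have hbase : Tendsto (fun r : ℝ => ((r:ℝ):ℂ)) (nhdsWithin (1:ℝ) (Set.Iio 1))
        (nhds (((1:ℝ):ℂ))) :=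
      (Complex.continuous_ofReal.tendsto 1).mono_left nhdsWithin_le_nhds
    rw [hGdef]
    apply Tendsto.mul tendsto_const_nhds
    apply tendsto_finset_sum
    intro j _
    apply Tendsto.mul tendsto_const_nhds
    apply Tendsto.div
    · apply tendsto_finset_sum
      intro a _
      exact Tendsto.mul tendsto_const_nhds ((hbase.mul tendsto_const_nhds).pow a)
    · exact ((hbase.mul tendsto_const_nhds).pow d).const_add 1
    · have : (1:ℂ) + (((1:ℝ):ℂ) * (q:ℂ)^j)^d = 1 + (q:ℂ)^(d*j) := by
        rw [Complex.ofReal_one, one_mul, ← pow_mul, mul_comm]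
      rw [this]
      exact hdenC j
  -- Step 3: G 1 is the claimed value
  have hrpow : ∀ (a j : ℕ), (q^d : ℝ) ^ (((a:ℝ)/(d:ℝ)) * (j:ℝ)) = q ^ (a*j) := by
    intro a j
    have hd0 : (d:ℝ) ≠ 0 := Nat.cast_ne_zero.mpr (NeZero.ne d)
    rw [← Real.rpow_natCast q d, ← Real.rpow_mul hq0.le, ← Real.rpow_natCast q (a*j)]
    congr 1
    push_cast
    field_simp
  have hpoly : ∀ a : ℕ, qEulerPoly (q^d) n ((a:ℝ)/(d:ℝ))
      = 2 * (1/(1-q^d))^n *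
          ∑ j ∈ Finset.range (n+1), (n.choose j : ℝ)*(-1)^j * q^(a*j) / (1 + q^(d*j)) := by
    intro a
    unfold qEulerPoly
    refine congrArg _ (Finset.sum_congr rfl fun j _ => ?_)
    rw [hrpow a j, ← pow_mul]
  have hG1 : G 1 = (((((1 - q^d)/(1-q))^n : ℝ) : ℂ) *
      ∑ a ∈ Finset.range d,
        χ (a : ZMod d) * (-1:ℂ)^a * ((qEulerPoly (q^d) n ((a:ℝ)/(d:ℝ)) : ℝ) : ℂ)) := by
    rw [hGdef]
    have hsimp : ∀ j : ℕ,
        (∑ a ∈ Finset.range d, χ (a : ZMod d) * (-1:ℂ)^a * (((1:ℝ):ℂ) * (q:ℂ)^j)^a) /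
            (1 + (((1:ℝ):ℂ) * (q:ℂ)^j)^d)
          = ∑ a ∈ Finset.range d,
              χ (a : ZMod d) * (-1:ℂ)^a * (q:ℂ)^(a*j) / (1 + (q:ℂ)^(d*j)) := by
      intro j
      rw [Finset.sum_div]
      refine Finset.sum_congr rfl fun a _ => ?_
      rw [Complex.ofReal_one, one_mul, ← pow_mul, ← pow_mul, mul_comm j a, mul_comm j d]
    calc 2 * (((1/(1-q))^n : ℝ) : ℂ) *
        ∑ j ∈ Finset.range (n+1), (n.choose j : ℂ) * (-1:ℂ)^j *
          ((∑ a ∈ Finset.range d, χ (a : ZMod d) * (-1:ℂ)^a * (((1:ℝ):ℂ) * (q:ℂ)^j)^a) /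
            (1 + (((1:ℝ):ℂ) * (q:ℂ)^j)^d))
        = ∑ j ∈ Finset.range (n+1), ∑ a ∈ Finset.range d,
            2 * (((1/(1-q))^n : ℝ) : ℂ) * ((n.choose j : ℂ) * (-1:ℂ)^j *
              (χ (a : ZMod d) * (-1:ℂ)^a * (q:ℂ)^(a*j) / (1 + (q:ℂ)^(d*j)))) := by
          rw [Finset.mul_sum]
          refine Finset.sum_congr rfl fun j _ => ?_
          rw [hsimp j, Finset.mul_sum, Finset.mul_sum]
      _ = ∑ a ∈ Finset.range d, ∑ j ∈ Finset.range (n+1),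
            2 * (((1/(1-q))^n : ℝ) : ℂ) * ((n.choose j : ℂ) * (-1:ℂ)^j *
              (χ (a : ZMod d) * (-1:ℂ)^a * (q:ℂ)^(a*j) / (1 + (q:ℂ)^(d*j)))) :=
          Finset.sum_comm
      _ = (((((1 - q^d)/(1-q))^n : ℝ) : ℂ) *
          ∑ a ∈ Finset.range d,
            χ (a : ZMod d) * (-1:ℂ)^a * ((qEulerPoly (q^d) n ((a:ℝ)/(d:ℝ)) : ℝ) : ℂ)) := by
          rw [Finset.mul_sum]
          refine Finset.sum_congr rfl fun a _ => ?_
          rw [hpoly a]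
          push_cast
          rw [Finset.mul_sum, Finset.mul_sum, Finset.mul_sum]
          refine Finset.sum_congr rfl fun j _ => ?_
          have h1 : ((1:ℂ) + (q:ℂ)^(d*j)) ≠ 0 := hdenC j
          field_simp
          have h2 : (1-(q:ℂ)^d)⁻¹^n * (-((q:ℂ)^d*(1-(q:ℂ))⁻¹) + (1-(q:ℂ))⁻¹)^n = (1-(q:ℂ))⁻¹^n := by
            rw [← mul_pow]
            congr 1
            rw [show -((q:ℂ)^d * (1-(q:ℂ))⁻¹) + (1-(q:ℂ))⁻¹ = (1-(q:ℂ)^d) * (1-(q:ℂ))⁻¹ by ring,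
              ← mul_assoc, inv_mul_cancel₀ hqd1c, one_mul]
          linear_combination (-((q:ℂ)^(a*j) * (n.choose j : ℂ) * χ (a : ZMod d))) * h2
  rw [← hG1]
  apply hGtend.congr'
  filter_upwards [Ioo_mem_nhdsLT_of_mem (Set.mem_Ioc.2 ⟨zero_lt_one, le_refl 1⟩)] with r hr
  exact (heq r hr.1 hr.2).symm
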